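/- In the stopping game $G(p,A)$ with $0<p<1$ and $A>1/p$: for any Maximizer strategy given by stopping probabilities $\sigma^1_i, \sigma^0_i \ge 0$ (for $b=1$ and $b=0$ respectively, with $\sum_i \sigma^b_i \le 1$), if $p\sum_{i=1}^\infty \sigma^1_i - (1-p)\sum_{i=1}^\infty \sigma^0_i > p - \frac{1-p}{A}$ (the payoff against the never-stopping Minimizer), then $\sum_{i=1}^\infty \sigma^1_i > 1 - \frac{1-p}{Ap}$, and choosing $N$ with $\sum_{i=1}^N \sigma^1_i > 1 - \frac{1-p}{Ap}$, the Minimizer's strategy of stopping at stage $N$ yields payoff $p\sum_{i=1}^N \sigma^1_i + p(1 - \sum_{i=1}^N \sigma^1_i)A - (1-p) < p - \frac{1-p}{A}$. Hence no Maximizer strategy guarantees more than $p - \frac{1-p}{A}$, so $\underline{val}(G) = p - \frac{1-p}{A}$. -/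

import Mathlib

/-- In the stopping game `G(p,A)` with `0 < p < 1`, `A > 1/p`: if a Maximizer strategy
(stopping probabilities `σ1` when `b = 1`, `σ0` when `b = 0`) yields more than
`p - (1-p)/A` against the never-stopping Minimizer, then `∑ σ1 > 1 - (1-p)/(Ap)`, and
for some `N` with `∑_{i<N} σ1 i > 1 - (1-p)/(Ap)`, the Minimizer's strategy of stopping
at stage `N` yields payoff `p ∑_{i<N} σ1 + p (1 - ∑_{i<N} σ1) A - (1-p) < p - (1-p)/A`. -/
theorem stmt15 (p A : ℝ) (hp0 : 0 < p) (hp1 : p < 1) (hA : A > 1 / p)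
    (σ1 σ0 : ℕ → ℝ) (hσ1 : ∀ i, 0 ≤ σ1 i) (hσ0 : ∀ i, 0 ≤ σ0 i)
    (hs1 : Summable σ1) (hs0 : Summable σ0)
    (ht1 : ∑' i, σ1 i ≤ 1) (ht0 : ∑' i, σ0 i ≤ 1)
    (hgain : p * (∑' i, σ1 i) - (1 - p) * (∑' i, σ0 i) > p - (1 - p) / A) :
    (∑' i, σ1 i) > 1 - (1 - p) / (A * p) ∧
    ∃ N : ℕ, (∑ i ∈ Finset.range N, σ1 i) > 1 - (1 - p) / (A * p) ∧
      p * (∑ i ∈ Finset.range N, σ1 i) +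
        p * (1 - ∑ i ∈ Finset.range N, σ1 i) * A - (1 - p) <
        p - (1 - p) / A := by

  have hA0 : 0 < A := lt_trans (div_pos one_pos hp0) hA
  have hpA : 1 < p * A := by
    rw [gt_iff_lt, div_lt_iff₀ hp0] at hA; linarith
  have hS0 : 0 ≤ ∑' i, σ0 i := tsum_nonneg hσ0
  have hS1 : (∑' i, σ1 i) > 1 - (1 - p) / (A * p) := by
    have h1 : p * (∑' i, σ1 i) > p - (1 - p) / A := by nlinarith
    rw [gt_iff_lt, show (1:ℝ) - (1-p)/(A*p) = (p - (1-p)/A)/p from by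
      field_simp, div_lt_iff₀ hp0] at *
    nlinarith
  refine ⟨hS1, ?_⟩
  have hten := hs1.hasSum.tendsto_sum_nat
  obtain ⟨N, hN⟩ := (hten.eventually (eventually_gt_nhds hS1)).exists
  refine ⟨N, hN, ?_⟩
  set s := ∑ i ∈ Finset.range N, σ1 i with hs
  have hb2 : (1 - s) * (A * p) < 1 - p := by
    rw [← lt_div_iff₀ (by positivity)]; linarith
  have hdiv : (1 - p) / A * A = 1 - p := div_mul_cancel₀ _ hA0.ne'
  have hgoal : (p * s + p * (1 - s) * A - (1 - p) - (p - (1 - p) / A)) * A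
      = ((1 - s) * (A * p) - (1 - p)) * (A - 1) := by
    field_simp; ring
  nlinarith [mul_pos (sub_pos.mpr (lt_of_lt_of_le hpA (by nlinarith : p * A ≤ A)))
    (sub_pos.mpr hb2)]
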